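/- Let G be a group with subgroups H ≤ U ≤ G, and let A ≤ G be a Dedekind subgroup with AH = G. Set J = N_G(H) ∩ A and J₁ = U ∩ A. Then N_G(H) = HJ, U = H J₁, J normalizes U, and hence N_G(H) ≤ N_G(U); in particular N_G(H)·U is a subgroup of G normalizing U. -/

import Mathlib

open scoped Pointwise

/-- If `A` is a Dedekind subgroup with `AH = G` and `H ≤ U`, then with
`J = N_G(H) ⊓ A` and `J₁ = U ⊓ A` we have `N_G(H) = HJ`, `U = HJ₁`, `J`
normalizes `U`, `N_G(H) ≤ N_G(U)`, and `N_G(H)·U` is a subgroup of `G`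
normalizing `U`. -/
theorem stmt_16 {G : Type*} [Group G] (H A U : Subgroup G)
    (hAH : (A : Set G) * (H : Set G) = Set.univ)
    (hDed : ∀ J : Subgroup G, J ≤ A → (J.subgroupOf A).Normal)
    (hHU : H ≤ U) :
    (Subgroup.normalizer (H : Set G) : Set G) = (H : Set G) * ((Subgroup.normalizer (H : Set G) ⊓ A : Subgroup G) : Set G) ∧
    (U : Set G) = (H : Set G) * ((U ⊓ A : Subgroup G) : Set G) ∧
    Subgroup.normalizer (H : Set G) ⊓ A ≤ Subgroup.normalizer (U : Set G) ∧
    Subgroup.normalizer (H : Set G) ≤ Subgroup.normalizer (U : Set G) ∧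
    ∃ W : Subgroup G, (W : Set G) = (Subgroup.normalizer (H : Set G) : Set G) * (U : Set G) ∧
      W ≤ Subgroup.normalizer (U : Set G) := by
  -- Every element of G factors as h * a with h ∈ H, a ∈ A.
  have hHA : ∀ g : G, ∃ h ∈ H, ∃ a ∈ A, g = h * a := by
    intro g
    have : g⁻¹ ∈ (A : Set G) * (H : Set G) := by rw [hAH]; trivial
    obtain ⟨a, ha, h, hh, hah⟩ := this
    refine ⟨h⁻¹, inv_mem hh, a⁻¹, inv_mem ha, ?_⟩
    have hah' : a * h = g⁻¹ := hah
    rw [← mul_inv_rev, hah', inv_inv]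
  -- Key factorization: any subgroup K containing H satisfies K = H(K ∩ A).
  have key : ∀ K : Subgroup G, H ≤ K → (K : Set G) = (H : Set G) * ((K ⊓ A : Subgroup G) : Set G) := by
    intro K hK
    apply Set.Subset.antisymm
    · intro k hk
      obtain ⟨h, hh, a, ha, rfl⟩ := hHA k
      have haK : a ∈ K := by
        have : h⁻¹ * (h * a) ∈ K := mul_mem (inv_mem (hK hh)) hk
        simpa using this
      exact ⟨h, hh, a, ⟨haK, ha⟩, rfl⟩
    · rintro x ⟨h, hh, a, ha, rfl⟩
      exact mul_mem (hK hh) ha.1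
  have part1 := key (Subgroup.normalizer (H : Set G)) Subgroup.le_normalizer
  have part2 := key U hHU
  -- Conjugation by elements of J = N(H) ⊓ A preserves U.
  have conjU : ∀ j ∈ Subgroup.normalizer (H : Set G) ⊓ A, ∀ u ∈ U, j * u * j⁻¹ ∈ U := by
    rintro j ⟨hjN, hjA⟩ u hu
    have hu' : u ∈ (H : Set G) * ((U ⊓ A : Subgroup G) : Set G) := by
      rw [← part2]; exact hu
    obtain ⟨h, hh, a, ha, rfl⟩ := hu'
    have h1 : j * h * j⁻¹ ∈ H := (Subgroup.mem_normalizer_iff.mp hjN h).mp hh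
    have hUA : U ⊓ A ≤ A := inf_le_right
    haveI := hDed (U ⊓ A) hUA
    have h2 : j * a * j⁻¹ ∈ U := by
      have := (hDed (U ⊓ A) hUA).conj_mem ⟨a, ha.2⟩ (by exact ha) ⟨j, hjA⟩
      simpa [Subgroup.mem_subgroupOf] using this.1
    have : (j * h * j⁻¹) * (j * a * j⁻¹) ∈ U := mul_mem (hHU h1) h2
    simpa [mul_assoc] using this
  have part3 : Subgroup.normalizer (H : Set G) ⊓ A ≤ Subgroup.normalizer (U : Set G) := by
    intro j hj
    have hj' : j⁻¹ ∈ Subgroup.normalizer (H : Set G) ⊓ A := inv_mem hj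
    rw [Subgroup.mem_normalizer_iff]
    intro n
    constructor
    · exact fun hn => conjU j hj n hn
    · intro hn
      have := conjU j⁻¹ hj' _ hn
      simpa [mul_assoc] using this
  have part4 : Subgroup.normalizer (H : Set G) ≤ Subgroup.normalizer (U : Set G) := by
    intro x hx
    have : x ∈ (H : Set G) * ((Subgroup.normalizer (H : Set G) ⊓ A : Subgroup G) : Set G) := by
      rw [← part1]; exact hx
    obtain ⟨h, hh, j, hj, rfl⟩ := this
    exact mul_mem (Subgroup.le_normalizer (hHU hh)) (part3 hj)
  refine ⟨part1, part2, part3, part4, ?_⟩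
  refine ⟨{ carrier := (Subgroup.normalizer (H : Set G) : Set G) * (U : Set G)
            one_mem' := ⟨1, one_mem _, 1, one_mem _, by simp⟩
            mul_mem' := ?_
            inv_mem' := ?_ }, rfl, ?_⟩
  · rintro x y ⟨n₁, hn₁, u₁, hu₁, rfl⟩ ⟨n₂, hn₂, u₂, hu₂, rfl⟩
    refine ⟨n₁ * n₂, mul_mem hn₁ hn₂, (n₂⁻¹ * u₁ * n₂) * u₂,
      mul_mem ?_ hu₂, by group⟩
    simpa using (Subgroup.mem_normalizer_iff.mp (inv_mem (part4 hn₂)) u₁).mp hu₁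
  · rintro x ⟨n, hn, u, hu, rfl⟩
    refine ⟨n⁻¹, inv_mem hn, n * u⁻¹ * n⁻¹, ?_, by group⟩
    exact (Subgroup.mem_normalizer_iff.mp (part4 hn) u⁻¹).mp (inv_mem hu)
  · rintro x ⟨n, hn, u, hu, rfl⟩
    exact mul_mem (part4 hn) (Subgroup.le_normalizer hu)
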